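/- arXiv:1906.09966 — 2 statements merged into one kernel-verified Lean document; each statement's English description precedes it below -/
import Mathlib

section
/- Let 0 < α < 1 and let d be a metric on ℝ such that for all x < z < y: d(x,y) ≥ max{d(x,z) + α·d(z,y), α·d(x,z) + d(z,y)}. Then for any x < z < y with d(x,z) = d(z,y) (a 'harmonic' configuration with midpoint z), and any x < z' < y with d(x,z') = d(z',y), we have z = z'. That is, the metric midpoint in this sense is unique. -/
theorem stmt_11 (α : ℝ) (hα : 0 < α) (hα1 : α < 1) (d : ℝ → ℝ → ℝ)
    (hsymm : ∀ x y, d x y = d y x)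
    (hzero : ∀ x y, d x y = 0 ↔ x = y)
    (hnonneg : ∀ x y, 0 ≤ d x y)
    (htri : ∀ x y z, d x y ≤ d x z + d z y)
    (hM : ∀ x z y : ℝ, x < z → z < y →
      d x y ≥ max (d x z + α * d z y) (α * d x z + d z y))
    (x y z z' : ℝ) (hxz : x < z) (hzy : z < y) (hxz' : x < z') (hz'y : z' < y)
    (hmid : d x z = d z y) (hmid' : d x z' = d z' y) :
    z = z' := by
  have key : ∀ a b : ℝ, a < b → x < a → b < y →
      d x a = d a y → d x b = d b y → False := by
    intro a b hab hxa hby ha hb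
    have hd : 0 < d a b := by
      rcases lt_or_eq_of_le (hnonneg a b) with h | h
      · exact h
      · exact absurd ((hzero a b).mp h.symm) (ne_of_lt hab)
    have h1 : d x b ≥ d x a + α * d a b :=
      le_trans (le_max_left _ _) (hM x a b hxa hab)
    have h2 : d a y ≥ α * d a b + d b y :=
      le_trans (le_max_right _ _) (hM a b y hab hby)
    nlinarith [h1, h2, ha, hb, mul_pos hα hd]
  rcases lt_trichotomy z z' with h | h | h
  · exact absurd (key z z' h hxz hz'y hmid hmid') id
  · exact h
  · exact absurd (key z' z h hxz' hzy hmid' hmid) id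
end

section
/- Let 0 < α < 1 and let d be a metric on ℝ, continuous as a function of each variable with respect to the standard topology, unbounded on both ends (d(0,x) → ∞ as x → ±∞), satisfying the M(α) betweenness inequality: for x < z < y, d(x,y) ≥ max{d(x,z)+α·d(z,y), α·d(x,z)+d(z,y)}. Then for any x < z there exists a unique y > z with d(x,z) = d(z,y). -/
theorem stmt_12 (α : ℝ) (hα : 0 < α) (hα1 : α < 1) (d : ℝ → ℝ → ℝ)
    (hsymm : ∀ x y, d x y = d y x)
    (hzero : ∀ x y, d x y = 0 ↔ x = y)
    (hnonneg : ∀ x y, 0 ≤ d x y)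
    (htri : ∀ x y z, d x y ≤ d x z + d z y)
    (hcont : ∀ x : ℝ, Continuous (fun t => d x t))
    (htop : Filter.Tendsto (fun t => d 0 t) Filter.atTop Filter.atTop)
    (hbot : Filter.Tendsto (fun t => d 0 t) Filter.atBot Filter.atTop)
    (hM : ∀ x z y : ℝ, x < z → z < y →
      d x y ≥ max (d x z + α * d z y) (α * d x z + d z y))
    (x z : ℝ) (hxz : x < z) :
    ∃! y : ℝ, z < y ∧ d x z = d z y := by
  set c := d x z with hc
  have hcpos : 0 < c := by
    rcases lt_or_eq_of_le (hnonneg x z) with h | h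
    · exact h
    · exact absurd ((hzero x z).mp h.symm) (ne_of_lt hxz)
  -- find T ≥ z with d z T ≥ c
  obtain ⟨T, hT⟩ := ((htop.eventually_ge_atTop (c + d 0 z)).and
    (Filter.eventually_ge_atTop z)).exists
  have hdzT : c ≤ d z T := by
    have h1 : d 0 T ≤ d 0 z + d z T := htri 0 T z
    linarith [hT.1]
  have hIVT := intermediate_value_Icc hT.2 (hcont z).continuousOn
  have hzz : d z z = 0 := (hzero z z).mpr rfl
  have hmem : c ∈ Set.Icc (d z z) (d z T) := by
    rw [hzz]; exact ⟨hcpos.le, hdzT⟩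
  obtain ⟨y, hy, hdy⟩ := hIVT hmem
  simp only [] at hdy
  have hzy : z < y := by
    rcases lt_or_eq_of_le hy.1 with h | h
    · exact h
    · exfalso; simp only [← h, hzz] at hdy; linarith
  refine ⟨y, ⟨hzy, hdy.symm⟩, ?_⟩
  rintro y' ⟨hzy', hdy'⟩
  by_contra hne
  -- WLOG via both orders
  have key : ∀ a b : ℝ, z < a → z < b → a < b → d z a = c → d z b = c → False := by
    intro a b hza hzb hab hda hdb
    have hdabpos : 0 < d a b := by
      rcases lt_or_eq_of_le (hnonneg a b) with h | h
      · exact h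
      · exact absurd ((hzero a b).mp h.symm) (ne_of_lt hab)
    have := hM z a b hza hab
    have h1 : d z a + α * d a b ≤ d z b := le_trans (le_max_left _ _) this
    nlinarith
  rcases lt_trichotomy y y' with h | h | h
  · exact key y y' hzy hzy' h hdy (hdy'.symm)
  · exact hne h.symm
  · exact key y' y hzy' hzy h (hdy'.symm) hdy
end
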